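/- Let π ∈ 𝒫, x ∈ S and r ∈ ℕ be fixed, and suppose the admissible history h̃_r = (x̃_0, ã_0, …, x̃_{r−1}, ã_{r−1}, x̃_r) satisfies P_x^π[I_r = h̃_r] > 0, where I_r := (X_0, A_0, …, X_{r−1}, A_{r−1}, X_r). Define the shifted policy δ by δ_t(·|h_t) := π_{t+r}(·| x̃_0, ã_0, …, x̃_{r−1}, ã_{r−1}, h_t) for t ∈ ℕ and h_t an admissible history. Then J(λ,π,x) ≥ J(λ,δ,x̃_r) ≥ J*(λ,x̃_r). -/

import Mathlib

open scoped Classical BigOperators ENNReal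

namespace RiskSensitive

/-- A (history-dependent, randomized) policy for a finite MDP: given the past
(chronological list of (state, action) pairs) and the current state, it assigns a
probability weight to each action, concentrated on the admissible actions. -/
structure Policy (S A : Type*) [Fintype S] [Fintype A] (Adm : S → Finset A) where
  toFun : List (S × A) → S → A → ℝ
  nonneg : ∀ h s a, 0 ≤ toFun h s a
  sum_one : ∀ h s, ∑ a, toFun h s a = 1
  supp : ∀ h s a, a ∉ Adm s → toFun h s a = 0

variable {S A : Type*} [Fintype S] [Fintype A]
variable (Adm : S → Finset A) (p : S → A → S → ℝ) (C : S → A → ℝ) (lam : ℝ)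

/-- Probability of a finite trajectory (list of (action, next-state) pairs), given the
history so far and the current state. -/
noncomputable def pathProbAux (π : Policy S A Adm) :
    List (S × A) → S → List (A × S) → ℝ
  | _, _, [] => 1
  | hist, x, (a, y) :: rest =>
      π.toFun hist x a * p x a y * pathProbAux π (hist ++ [(x, a)]) y rest

/-- `pathProb π x l` is `P_x^π[A_0 = a_0, X_1 = y_1, …]` for `l = [(a_0,y_1),…]`. -/
noncomputable def pathProb (π : Policy S A Adm) (x : S) (l : List (A × S)) : ℝ :=
  pathProbAux Adm p π [] x l

/-- Probability of a cylinder event depending on the first `n` (action, next-state) pairs. -/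
noncomputable def cylProb (π : Policy S A Adm) (x : S) (n : ℕ)
    (E : (Fin n → A × S) → Prop) : ℝ :=
  ∑ v : Fin n → A × S, if E v then pathProb Adm p π x (List.ofFn v) else 0

/-- The state `X_t` along the trajectory encoded by `l`, starting from `x`. -/
def stateAt (x : S) (l : List (A × S)) (t : ℕ) : S :=
  (l.take t).foldl (fun _ q => q.2) x

/-- The final state of the finite trajectory `l` started at `x`. -/
def lastState (x : S) (l : List (A × S)) : S :=
  l.foldl (fun _ q => q.2) x

/-- `Σ_t w(X_t, A_t)` along the finite trajectory `l` started at `x`. -/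
def costSum (w : S → A → ℝ) : S → List (A × S) → ℝ
  | _, [] => 0
  | x, (a, y) :: rest => w x a + costSum w y rest

/-- `J_n(λ,π,x) = (1/λ) log E_x^π[exp(λ Σ_{t<n} C(X_t,A_t))]`. -/
noncomputable def Jn (π : Policy S A Adm) (x : S) (n : ℕ) : ℝ :=
  (1 / lam) * Real.log (∑ v : Fin n → A × S,
    pathProb Adm p π x (List.ofFn v) * Real.exp (lam * costSum C x (List.ofFn v)))

/-- The risk-sensitive average cost `J(λ,π,x) = limsup_n J_n(λ,π,x)/n`. -/
noncomputable def Javg (π : Policy S A Adm) (x : S) : ℝ :=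
  Filter.limsup (fun n : ℕ => Jn Adm p C lam π x n / n) Filter.atTop

/-- Optimal risk-sensitive average cost `J*(λ,x)`. -/
noncomputable def Jopt (x : S) : ℝ :=
  ⨅ π : Policy S A Adm, Javg Adm p C lam π x

/-- `π` is `ε`-optimal at `x`. -/
def EpsOptimalAt (π : Policy S A Adm) (x : S) (ε : ℝ) : Prop :=
  Javg Adm p C lam π x ≤ Jopt Adm p C lam x + ε

/-- `FirstExit Q v` : the trajectory `v` leaves `{Q}` for the first time exactly at its
last step, i.e. the exit time of `Q` equals `n`. -/
def FirstExit (Q : S → Prop) {n : ℕ} (v : Fin n → A × S) : Prop :=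
  0 < n ∧ (∀ t : Fin n, (t : ℕ) + 1 < n → Q (v t).2) ∧
    ∀ t : Fin n, (t : ℕ) + 1 = n → ¬ Q (v t).2

/-- `E_x^π[ exp(Σ_{t<τ} w(X_t,A_t)) ]` where `τ = min{n ≥ 1 : ¬ Q (X_n)}` is the first
exit time from `Q` (the contribution of `[τ = ∞]` is null when `τ < ∞` a.s.). -/
noncomputable def EexitExp (π : Policy S A Adm) (x : S) (Q : S → Prop)
    (w : S → A → ℝ) : ℝ≥0∞ :=
  ∑' n : ℕ, ∑ v : Fin n → A × S,
    if FirstExit Q v then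
      ENNReal.ofReal (pathProb Adm p π x (List.ofFn v) *
        Real.exp (costSum w x (List.ofFn v)))
    else 0

/-- `E_x^π[ exp(Σ_{t<T} w(X_t,A_t)) ]` with `T` the first positive arrival time to `z`. -/
noncomputable def EhitExp (π : Policy S A Adm) (x z : S) (w : S → A → ℝ) : ℝ≥0∞ :=
  EexitExp Adm p π x (fun y => y ≠ z) w

/-- `E_x^π[T]`, the expected first positive arrival time to `z`, computed as
`Σ_{n≥0} P_x^π[T > n]`. -/
noncomputable def ExpT (π : Policy S A Adm) (x z : S) : ℝ≥0∞ :=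
  ∑' n : ℕ, ENNReal.ofReal
    (cylProb Adm p π x n (fun v => ∀ t : Fin n, (v t).2 ≠ z))

/-- `P_x^π[T > n]`, the probability that `z` is not visited during the first `n` steps. -/
noncomputable def survProb (π : Policy S A Adm) (x z : S) (n : ℕ) : ℝ :=
  cylProb Adm p π x n (fun v => ∀ t : Fin n, (v t).2 ≠ z)

/-- The stationary policy induced by a choice function `f ∈ 𝔽`. -/
noncomputable def stationary (f : S → A) (hf : ∀ s, f s ∈ Adm s) : Policy S A Adm where
  toFun := fun _ s a => if a = f s then 1 else 0
  nonneg := by intro h s a; (try dsimp only); split <;> norm_num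
  sum_one := by intro h s; simp
  supp := by
    intro h s a ha
    try dsimp only
    rw [if_neg]
    intro hEq
    exact ha (hEq ▸ hf s)

/-- The simultaneous Doeblin condition: `E_x^f[T] ≤ M` for every state `x` and every
stationary policy `f`, where `T` is the first positive arrival time to `z`. -/
def Doeblin (z : S) (M : ℝ) : Prop :=
  0 < M ∧ ∀ (x : S) (f : S → A) (hf : ∀ s, f s ∈ Adm s),
    ExpT Adm p (stationary Adm f hf) x z ≤ ENNReal.ofReal M

/-- `B_g(x) = {a ∈ A(x) : g(x) = max{g(y) : p_{xy}(a) > 0}}`. -/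
def Bg (g : S → ℝ) (x : S) : Set A :=
  {a | a ∈ Adm x ∧ g x = sSup (g '' {y | 0 < p x a y})}

/-- The family `𝒢` of functions characterizing `J*(λ,·)`. -/
def Gclass : Set (S → ℝ) :=
  {g | (∀ x, g x = sInf ((fun a => sSup (g '' {y | 0 < p x a y})) '' (Adm x : Set A))) ∧
    ∃ h : S → ℝ, ∀ x,
      sInf ((fun a => Real.exp (lam * C x a) * ∑ y, p x a y * Real.exp (lam * h y)) ''
        Bg Adm p g x) ≤ Real.exp (lam * g x + lam * h x)}

/-- The class `𝒫*` of policies which always select actions in `B*(X_t)`. -/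
def Pstar : Set (Policy S A Adm) :=
  {π | ∀ (x : S) (t : ℕ),
    cylProb Adm p π x (t + 1)
      (fun v => (v (Fin.last t)).1 ∈
        Bg Adm p (Jopt Adm p C lam) (stateAt x (List.ofFn v) t)) = 1}

/-- The deviation function
`h(x) = inf_{π ∈ 𝒫*} (1/λ) log E_x^π[exp(λα Σ_{t<T}(C(X_t,A_t) − J*(λ,X_t)))]`. -/
noncomputable def hdev (z : S) (α : ℝ) (x : S) : EReal :=
  ⨅ π ∈ Pstar Adm p C lam, ((lam⁻¹ : ℝ) : EReal) *
    ENNReal.log (EhitExp Adm p π x z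
      (fun s a => lam * α * (C s a - Jopt Adm p C lam s)))

/-- `ψ(ε) = (1/λ) inf_{δ∈𝒫*} log E_z^δ[exp(λ Σ_{t<T}(C(X_t,A_t) − γ₀ − 2ε))]`. -/
noncomputable def psi (z : S) (ε : ℝ) : EReal :=
  ((lam⁻¹ : ℝ) : EReal) * ⨅ π ∈ Pstar Adm p C lam,
    ENNReal.log (EhitExp Adm p π z z
      (fun s a => lam * (C s a - Jopt Adm p C lam z - 2 * ε)))

/-- `ξ₀ = −(1−α) log β / (λα)`. -/
noncomputable def xi0 (α β : ℝ) : ℝ := -((1 - α) * Real.log β) / (lam * α)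

/-- `ξ₁`: 1 if `J*(λ,·)` is constant, otherwise the minimum gap between distinct
values of `J*(λ,·)`. -/
noncomputable def xi1 : ℝ :=
  if ∀ u v : S, Jopt Adm p C lam u = Jopt Adm p C lam v then 1
  else sInf {d | ∃ u v : S, Jopt Adm p C lam u < Jopt Adm p C lam v ∧
    d = Jopt Adm p C lam v - Jopt Adm p C lam u}

/-- `ξ = min{ξ₀, ξ₁}`. -/
noncomputable def xi (α β : ℝ) : ℝ := min (xi0 lam α β) (xi1 Adm p C lam)

/-- The shifted policy obtained by prefixing the fixed history `pre`. -/
def shiftPolicy (π : Policy S A Adm) (pre : List (S × A)) : Policy S A Adm where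
  toFun := fun h s a => π.toFun (pre ++ h) s a
  nonneg := fun h s a => π.nonneg _ s a
  sum_one := fun h s => π.sum_one _ s
  supp := fun h s a ha => π.supp _ s a ha

/-- The history (list of (state, action) pairs) along the trajectory `l` started at `x`. -/
def histOf : S → List (A × S) → List (S × A)
  | _, [] => []
  | x, (a, y) :: rest => (x, a) :: histOf y rest


section Aux9

lemma pathProbAux_nonneg
    (hp : ∀ (x : S), ∀ a ∈ Adm x, (∀ y, 0 ≤ p x a y) ∧ (∑ y, p x a y) = 1)
    (π : Policy S A Adm) :
    ∀ (l : List (A × S)) (hist : List (S × A)) (x : S), 0 ≤ pathProbAux Adm p π hist x l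
  | [], _, _ => by simp [pathProbAux]
  | (a, y) :: rest, hist, x => by
    by_cases ha : a ∈ Adm x
    · exact mul_nonneg (mul_nonneg (π.nonneg _ _ _) ((hp x a ha).1 y))
        (pathProbAux_nonneg hp π rest _ y)
    · simp [pathProbAux, π.supp _ _ _ ha]

omit [Fintype S] [Fintype A] in
lemma lastState_cons (x : S) (a : A) (y : S) (rest : List (A × S)) :
    lastState x ((a, y) :: rest) = lastState y rest := rfl

omit [Fintype S] [Fintype A] in
lemma costSum_append' (l l' : List (A × S)) (x : S) :
    costSum C x (l ++ l') = costSum C x l + costSum C (lastState x l) l' := by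
  induction l generalizing x with
  | nil => simp [costSum, lastState]
  | cons q rest ih =>
    rcases q with ⟨a, y⟩
    simp only [List.cons_append, costSum, lastState_cons, List.append_eq, ih y]
    ring

lemma pathProbAux_append' (π : Policy S A Adm) (l l' : List (A × S)) :
    ∀ (hist : List (S × A)) (x : S),
    pathProbAux Adm p π hist x (l ++ l') =
      pathProbAux Adm p π hist x l *
        pathProbAux Adm p π (hist ++ histOf x l) (lastState x l) l' := by
  induction l with
  | nil => intro hist x; simp [pathProbAux, histOf, lastState]
  | cons q rest ih =>
    rcases q with ⟨a, y⟩
    intro hist x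
    simp only [List.cons_append, pathProbAux, lastState_cons, histOf, List.append_eq,
      ih (hist ++ [(x, a)]) y]
    rw [List.append_assoc, List.singleton_append]
    ring

lemma pathProbAux_shift (π : Policy S A Adm) (pre : List (S × A)) (l : List (A × S)) :
    ∀ (hist : List (S × A)) (x : S),
    pathProbAux Adm p (shiftPolicy Adm π pre) hist x l =
      pathProbAux Adm p π (pre ++ hist) x l := by
  induction l with
  | nil => intro hist x; rfl
  | cons q rest ih =>
    rcases q with ⟨a, y⟩
    intro hist x
    simp only [pathProbAux, ih (hist ++ [(x, a)]) y, List.append_assoc]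
    rfl

lemma sum_pathProbAux_eq_one
    (hp : ∀ (x : S), ∀ a ∈ Adm x, (∀ y, 0 ≤ p x a y) ∧ (∑ y, p x a y) = 1)
    (π : Policy S A Adm) :
    ∀ (n : ℕ) (hist : List (S × A)) (x : S),
    ∑ v : Fin n → A × S, pathProbAux Adm p π hist x (List.ofFn v) = 1
  | 0, hist, x => by simp [pathProbAux]
  | n + 1, hist, x => by
    rw [← Fintype.sum_equiv (Fin.consEquiv (fun _ : Fin (n + 1) => A × S))
      (fun q => pathProbAux Adm p π hist x (List.ofFn ((Fin.consEquiv _) q)))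
      (fun v => pathProbAux Adm p π hist x (List.ofFn v)) (fun q => rfl)]
    rw [Fintype.sum_prod_type]
    have hofn : ∀ (q : A × S) (w : Fin n → A × S),
        List.ofFn ((Fin.consEquiv (fun _ : Fin (n + 1) => A × S)) (q, w)) =
          q :: List.ofFn w := by
      intro q w
      simp [Fin.consEquiv, List.ofFn_succ]
    calc ∑ q : A × S, ∑ w : Fin n → A × S,
          pathProbAux Adm p π hist x (List.ofFn ((Fin.consEquiv _) (q, w)))
        = ∑ q : A × S, π.toFun hist x q.1 * p x q.1 q.2 := by
          refine Finset.sum_congr rfl fun q _ => ?_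
          rcases q with ⟨a, y⟩
          rw [Finset.sum_congr rfl (fun w _ => by rw [hofn (a, y) w])]
          simp only [pathProbAux]
          rw [← Finset.mul_sum, sum_pathProbAux_eq_one hp π n (hist ++ [(x, a)]) y, mul_one]
      _ = 1 := by
          rw [Fintype.sum_prod_type]
          have key : ∀ a : A, ∑ y : S, π.toFun hist x a * p x a y = π.toFun hist x a := by
            intro a
            by_cases ha : a ∈ Adm x
            · rw [← Finset.mul_sum, (hp x a ha).2, mul_one]
            · simp [π.supp _ _ _ ha]
          rw [Finset.sum_congr rfl fun a _ => key a, π.sum_one]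

end Aux9

section Aux9b

omit [Fintype S] [Fintype A] in
lemma costSum_bounds {m M : ℝ} (hm : ∀ s a, m ≤ C s a) (hM : ∀ s a, C s a ≤ M) :
    ∀ (l : List (A × S)) (x : S),
      m * l.length ≤ costSum C x l ∧ costSum C x l ≤ M * l.length
  | [], x => by simp [costSum]
  | (a, y) :: rest, x => by
    obtain ⟨h1, h2⟩ := costSum_bounds hm hM rest y
    constructor
    · simp only [costSum, List.length_cons]
      push_cast
      have := hm x a
      nlinarith
    · simp only [costSum, List.length_cons]
      push_cast
      have := hM x a
      nlinarith

/-- The key exponential-moment sum occurring in `Jn`. -/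
noncomputable def Sexp (π : Policy S A Adm) (x : S) (n : ℕ) : ℝ :=
  ∑ v : Fin n → A × S,
    pathProb Adm p π x (List.ofFn v) * Real.exp (lam * costSum C x (List.ofFn v))

lemma Jn_eq_Sexp (π : Policy S A Adm) (x : S) (n : ℕ) :
    Jn Adm p C lam π x n = (1 / lam) * Real.log (Sexp Adm p C lam π x n) := rfl

lemma Sexp_bounds
    (hp : ∀ (x : S), ∀ a ∈ Adm x, (∀ y, 0 ≤ p x a y) ∧ (∑ y, p x a y) = 1)
    (hlam : 0 < lam) {m M : ℝ} (hm : ∀ s a, m ≤ C s a) (hM : ∀ s a, C s a ≤ M)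
    (π : Policy S A Adm) (x : S) (n : ℕ) :
    Real.exp (lam * (m * n)) ≤ Sexp Adm p C lam π x n ∧
      Sexp Adm p C lam π x n ≤ Real.exp (lam * (M * n)) := by
  have hsum := sum_pathProbAux_eq_one Adm p hp π n ([] : List (S × A)) x
  have hnn : ∀ v : Fin n → A × S, 0 ≤ pathProb Adm p π x (List.ofFn v) :=
    fun v => pathProbAux_nonneg Adm p hp π _ _ _
  constructor
  · calc Real.exp (lam * (m * n))
        = ∑ v : Fin n → A × S,
            pathProb Adm p π x (List.ofFn v) * Real.exp (lam * (m * n)) := by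
          rw [← Finset.sum_mul]
          show Real.exp _ = (∑ v : Fin n → A × S,
            pathProbAux Adm p π [] x (List.ofFn v)) * Real.exp _
          rw [hsum, one_mul]
      _ ≤ Sexp Adm p C lam π x n := by
          refine Finset.sum_le_sum fun v _ => ?_
          refine mul_le_mul_of_nonneg_left ?_ (hnn v)
          refine Real.exp_le_exp.2 (mul_le_mul_of_nonneg_left ?_ hlam.le)
          have := (costSum_bounds C hm hM (List.ofFn v) x).1
          simpa using this
  · calc Sexp Adm p C lam π x n
        ≤ ∑ v : Fin n → A × S,
            pathProb Adm p π x (List.ofFn v) * Real.exp (lam * (M * n)) := by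
          refine Finset.sum_le_sum fun v _ => ?_
          refine mul_le_mul_of_nonneg_left ?_ (hnn v)
          refine Real.exp_le_exp.2 (mul_le_mul_of_nonneg_left ?_ hlam.le)
          have := (costSum_bounds C hm hM (List.ofFn v) x).2
          simpa using this
      _ = Real.exp (lam * (M * n)) := by
          rw [← Finset.sum_mul]
          show (∑ v : Fin n → A × S,
            pathProbAux Adm p π [] x (List.ofFn v)) * Real.exp _ = _
          rw [hsum, one_mul]

lemma Jn_bounds
    (hp : ∀ (x : S), ∀ a ∈ Adm x, (∀ y, 0 ≤ p x a y) ∧ (∑ y, p x a y) = 1)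
    (hlam : 0 < lam) {m M : ℝ} (hm : ∀ s a, m ≤ C s a) (hM : ∀ s a, C s a ≤ M)
    (π : Policy S A Adm) (x : S) (n : ℕ) :
    m * n ≤ Jn Adm p C lam π x n ∧ Jn Adm p C lam π x n ≤ M * n := by
  obtain ⟨h1, h2⟩ := Sexp_bounds Adm p C lam hp hlam hm hM π x n
  have hpos : (0 : ℝ) < Sexp Adm p C lam π x n := lt_of_lt_of_le (Real.exp_pos _) h1
  rw [Jn_eq_Sexp]
  constructor
  · have := Real.log_le_log (Real.exp_pos _) h1
    rw [Real.log_exp] at this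
    calc m * n = (1 / lam) * (lam * (m * n)) := by field_simp
      _ ≤ (1 / lam) * Real.log (Sexp Adm p C lam π x n) :=
        mul_le_mul_of_nonneg_left this (by positivity)
  · have := Real.log_le_log hpos h2
    rw [Real.log_exp] at this
    calc (1 / lam) * Real.log (Sexp Adm p C lam π x n)
        ≤ (1 / lam) * (lam * (M * n)) :=
        mul_le_mul_of_nonneg_left this (by positivity)
      _ = M * n := by field_simp

end Aux9b

section Aux9c

lemma Javg_bounds
    (hp : ∀ (x : S), ∀ a ∈ Adm x, (∀ y, 0 ≤ p x a y) ∧ (∑ y, p x a y) = 1)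
    (hlam : 0 < lam) {m M : ℝ} (hm : ∀ s a, m ≤ C s a) (hM : ∀ s a, C s a ≤ M)
    (π : Policy S A Adm) (x : S) :
    m ≤ Javg Adm p C lam π x ∧ Javg Adm p C lam π x ≤ M := by
  have hub : ∀ n : ℕ, 1 ≤ n → Jn Adm p C lam π x n / n ≤ M := by
    intro n hn
    have h2 := (Jn_bounds Adm p C lam hp hlam hm hM π x n).2
    have hn' : (0 : ℝ) < n := by exact_mod_cast hn
    rw [div_le_iff₀ hn']
    linarith [h2]
  have hlb : ∀ n : ℕ, 1 ≤ n → m ≤ Jn Adm p C lam π x n / n := by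
    intro n hn
    have h1 := (Jn_bounds Adm p C lam hp hlam hm hM π x n).1
    have hn' : (0 : ℝ) < n := by exact_mod_cast hn
    rw [le_div_iff₀ hn']
    linarith [h1]
  have hbdd : Filter.IsBoundedUnder (· ≤ ·) Filter.atTop
      (fun n : ℕ => Jn Adm p C lam π x n / n) :=
    Filter.isBoundedUnder_of_eventually_le (a := M)
      (Filter.eventually_atTop.2 ⟨1, hub⟩)
  have hcobdd : Filter.IsCoboundedUnder (· ≤ ·) Filter.atTop
      (fun n : ℕ => Jn Adm p C lam π x n / n) :=
    (Filter.isBoundedUnder_of_eventually_ge (a := m)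
      (Filter.eventually_atTop.2 ⟨1, hlb⟩)).isCoboundedUnder_le
  constructor
  · exact Filter.le_limsup_of_frequently_le
      ((Filter.eventually_atTop.2 ⟨1, hlb⟩).frequently) hbdd
  · exact Filter.limsup_le_of_le hcobdd (Filter.eventually_atTop.2 ⟨1, hub⟩)

lemma Sexp_prefix_le
    (hp : ∀ (x : S), ∀ a ∈ Adm x, (∀ y, 0 ≤ p x a y) ∧ (∑ y, p x a y) = 1)
    (π : Policy S A Adm) (x : S) (l : List (A × S)) (n : ℕ) :
    (pathProb Adm p π x l * Real.exp (lam * costSum C x l)) *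
        Sexp Adm p C lam (shiftPolicy Adm π (histOf x l)) (lastState x l) n ≤
      Sexp Adm p C lam π x (l.length + n) := by
  classical
  set r := l.length
  set z := lastState x l
  set δ := shiftPolicy Adm π (histOf x l)
  set F : (Fin (r + n) → A × S) → ℝ := fun v =>
    pathProb Adm p π x (List.ofFn v) * Real.exp (lam * costSum C x (List.ofFn v)) with hF
  have hFnn : ∀ v, 0 ≤ F v := fun v =>
    mul_nonneg (pathProbAux_nonneg Adm p hp π _ _ _) (Real.exp_pos _).le
  have hul : List.ofFn l.get = l := List.ofFn_get l
  -- the embedding w ↦ Fin.append l.get w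
  have hinj : Function.Injective (fun w : Fin n → A × S => Fin.append l.get w) := by
    intro w w' h
    have := (Fin.appendEquiv r n).injective (a₁ := (l.get, w)) (a₂ := (l.get, w')) h
    exact congrArg Prod.snd this
  have key : ∀ w : Fin n → A × S,
      F (Fin.append l.get w) =
        (pathProb Adm p π x l * Real.exp (lam * costSum C x l)) *
          (pathProb Adm p δ z (List.ofFn w) *
            Real.exp (lam * costSum C z (List.ofFn w))) := by
    intro w
    rw [hF]
    simp only [List.ofFn_fin_append, hul]
    rw [costSum_append' C l (List.ofFn w) x]
    have hpp : pathProb Adm p π x (l ++ List.ofFn w) =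
        pathProb Adm p π x l * pathProb Adm p δ z (List.ofFn w) := by
      show pathProbAux Adm p π [] x (l ++ List.ofFn w) = _
      rw [pathProbAux_append' Adm p π l (List.ofFn w) [] x]
      congr 1
      show _ = pathProbAux Adm p δ [] z (List.ofFn w)
      rw [pathProbAux_shift Adm p π (histOf x l) (List.ofFn w) [] z]
      simp [z]
    rw [hpp, mul_add, Real.exp_add]
    ring
  calc (pathProb Adm p π x l * Real.exp (lam * costSum C x l)) *
        Sexp Adm p C lam δ z n
      = ∑ w : Fin n → A × S, F (Fin.append l.get w) := by
        rw [Sexp, Finset.mul_sum]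
        exact Finset.sum_congr rfl fun w _ => (key w).symm
    _ = ∑ v ∈ Finset.univ.image (fun w : Fin n → A × S => Fin.append l.get w), F v := by
        rw [Finset.sum_image (fun w _ w' _ h => hinj h)]
    _ ≤ ∑ v : Fin (r + n) → A × S, F v :=
        Finset.sum_le_sum_of_subset_of_nonneg (Finset.subset_univ _)
          (fun v _ _ => hFnn v)
    _ = Sexp Adm p C lam π x (r + n) := rfl

end Aux9c

/-- if the admissible history `h̃_r` (encoded by the trajectory `l` started
at `x`) has positive probability under `π`, then the shifted policy `δ` satisfies
`J(λ,π,x) ≥ J(λ,δ,x̃_r) ≥ J*(λ,x̃_r)`, where `x̃_r` is the final state of the history. -/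
theorem shifted_policy_bound
    (hA : ∀ x, (Adm x).Nonempty)
    (hp : ∀ (x : S), ∀ a ∈ Adm x, (∀ y, 0 ≤ p x a y) ∧ (∑ y, p x a y) = 1)
    (hlam : 0 < lam)
    (π : Policy S A Adm) (x : S) (l : List (A × S))
    (hl : 0 < pathProb Adm p π x l) :
    Javg Adm p C lam (shiftPolicy Adm π (histOf x l)) (lastState x l) ≤
        Javg Adm p C lam π x ∧
      Jopt Adm p C lam (lastState x l) ≤
        Javg Adm p C lam (shiftPolicy Adm π (histOf x l)) (lastState x l) := by
  haveI : Nonempty S := ⟨x⟩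
  obtain ⟨a0, _⟩ := hA x
  haveI : Nonempty A := ⟨a0⟩
  obtain ⟨M, hM'⟩ := Finite.exists_le (fun q : S × A => C q.1 q.2)
  obtain ⟨m, hm'⟩ := Finite.exists_ge (fun q : S × A => C q.1 q.2)
  have hm : ∀ s a, m ≤ C s a := fun s a => hm' (s, a)
  have hM : ∀ s a, C s a ≤ M := fun s a => hM' (s, a)
  set z := lastState x l with hz
  set δ := shiftPolicy Adm π (histOf x l) with hδ
  set r := l.length with hr
  -- second inequality
  have hopt : Jopt Adm p C lam z ≤ Javg Adm p C lam δ z := by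
    refine ciInf_le ⟨m, ?_⟩ δ
    rintro _ ⟨π', rfl⟩
    exact (Javg_bounds Adm p C lam hp hlam hm hM π' z).1
  refine ⟨?_, hopt⟩
  -- main inequality
  set c0 := pathProb Adm p π x l * Real.exp (lam * costSum C x l) with hc0def
  have hc0 : 0 < c0 := mul_pos hl (Real.exp_pos _)
  set K := (1 / lam) * Real.log c0 with hK
  have hstep : ∀ n : ℕ, Jn Adm p C lam δ z n ≤ Jn Adm p C lam π x (r + n) - K := by
    intro n
    have h1 := Sexp_prefix_le Adm p C lam hp π x l n
    have hSδ : 0 < Sexp Adm p C lam δ z n :=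
      lt_of_lt_of_le (Real.exp_pos _) (Sexp_bounds Adm p C lam hp hlam hm hM δ z n).1
    have hSπ : 0 < Sexp Adm p C lam π x (r + n) := lt_of_lt_of_le (mul_pos hc0 hSδ) h1
    have hlog : Real.log c0 + Real.log (Sexp Adm p C lam δ z n) ≤
        Real.log (Sexp Adm p C lam π x (r + n)) := by
      rw [← Real.log_mul hc0.ne' hSδ.ne']
      exact Real.log_le_log (mul_pos hc0 hSδ) h1
    rw [Jn_eq_Sexp, Jn_eq_Sexp, hK]
    have h2 : (1 / lam) * (Real.log c0 + Real.log (Sexp Adm p C lam δ z n)) ≤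
        (1 / lam) * Real.log (Sexp Adm p C lam π x (r + n)) :=
      mul_le_mul_of_nonneg_left hlog (by positivity)
    linarith [h2]
  -- limsup argument
  set u : ℕ → ℝ := fun n => Jn Adm p C lam π x n / n with hu
  set d : ℕ → ℝ := fun n => Jn Adm p C lam δ z n / n with hd
  set L := Javg Adm p C lam π x with hL
  have hbdd_u : Filter.IsBoundedUnder (· ≤ ·) Filter.atTop u := by
    refine Filter.isBoundedUnder_of_eventually_le (a := M)
      (Filter.eventually_atTop.2 ⟨1, fun n hn => ?_⟩)
    have h2 := (Jn_bounds Adm p C lam hp hlam hm hM π x n).2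
    have hn' : (0 : ℝ) < n := by exact_mod_cast hn
    rw [hu]; dsimp only; rw [div_le_iff₀ hn']; linarith
  have hcobdd_d : Filter.IsCoboundedUnder (· ≤ ·) Filter.atTop d := by
    refine (Filter.isBoundedUnder_of_eventually_ge (a := m)
      (Filter.eventually_atTop.2 ⟨1, fun n hn => ?_⟩)).isCoboundedUnder_le
    have h1 := (Jn_bounds Adm p C lam hp hlam hm hM δ z n).1
    have hn' : (0 : ℝ) < n := by exact_mod_cast hn
    rw [hd]; dsimp only; rw [le_div_iff₀ hn']; linarith
  refine le_of_forall_pos_le_add fun ε hε => ?_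
  have hlt : Filter.limsup u Filter.atTop < L + ε := by
    rw [hL, Javg]; exact lt_add_of_pos_right _ hε
  have hev := Filter.eventually_lt_of_limsup_lt hlt hbdd_u
  obtain ⟨N, hN⟩ := Filter.eventually_atTop.1 hev
  set g : ℕ → ℝ := fun n => (L + ε) + ((L + ε) * r - K) * (1 / n) with hg
  have hgt : Filter.Tendsto g Filter.atTop (nhds (L + ε)) := by
    have : Filter.Tendsto (fun n : ℕ => ((L + ε) * r - K) * (1 / n)) Filter.atTop
        (nhds (((L + ε) * r - K) * 0)) :=
      Filter.Tendsto.const_mul _ tendsto_one_div_atTop_nhds_zero_nat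
    rw [mul_zero] at this
    have := Filter.Tendsto.const_add (L + ε) this
    rw [add_zero] at this
    exact this
  have hdg : ∀ᶠ n in Filter.atTop, d n ≤ g n := by
    refine Filter.eventually_atTop.2 ⟨max N 1, fun n hn => ?_⟩
    have hn1 : 1 ≤ n := le_trans (le_max_right _ _) hn
    have hnN : N ≤ r + n := le_trans (le_trans (le_max_left _ _) hn) (Nat.le_add_left _ _)
    have hn' : (0 : ℝ) < n := by exact_mod_cast hn1
    have huN : u (r + n) < L + ε := hN _ hnN
    have hrn : (0 : ℝ) < ((r + n : ℕ) : ℝ) := by positivity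
    have hJrn : Jn Adm p C lam π x (r + n) < (L + ε) * ((r + n : ℕ) : ℝ) := by
      have : Jn Adm p C lam π x (r + n) / ((r + n : ℕ) : ℝ) < L + ε := huN
      calc Jn Adm p C lam π x (r + n)
          = Jn Adm p C lam π x (r + n) / ((r + n : ℕ) : ℝ) * ((r + n : ℕ) : ℝ) := by
            field_simp
        _ < (L + ε) * ((r + n : ℕ) : ℝ) := by
            exact mul_lt_mul_of_pos_right this hrn
    have hdn : d n ≤ (Jn Adm p C lam π x (r + n) - K) / n := by
      rw [hd]; dsimp only
      exact div_le_div_of_nonneg_right (hstep n) hn'.le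
    calc d n ≤ (Jn Adm p C lam π x (r + n) - K) / n := hdn
      _ ≤ ((L + ε) * ((r + n : ℕ) : ℝ) - K) / n :=
          div_le_div_of_nonneg_right (by linarith) hn'.le
      _ = g n := by
          rw [hg]; dsimp only
          push_cast
          field_simp
          ring
  have : Javg Adm p C lam δ z ≤ Filter.limsup g Filter.atTop := by
    rw [Javg]
    exact Filter.limsup_le_limsup hdg hcobdd_d hgt.isBoundedUnder_le
  rw [hgt.limsup_eq] at this
  exact this

end RiskSensitive
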